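/- Let f : ℝ^n → ℝ be continuously differentiable, attain its minimum value f* at some point, and satisfy the Polyak–Łojasiewicz (PL) inequality with parameter μ > 0: (1/2)‖∇f(z)‖₂² ≥ μ(f(z) − f*) for all z ∈ ℝ^n. Let π : ℝ^n → ℝ^n be a map with f(π(z)) = f* and ‖∇f(z)‖₂ ≥ 2√μ·‖z − π(z)‖₂ for all z (a projection onto the optimal set satisfying the quadratic-growth consequence of the PL inequality). Let q > 1, ε ≥ 0, d̄ ≥ 0, σ > d̄ + ε/(2√μ) and ρ > ε/(2√μ). Suppose x : [0,∞) → ℝ^n is differentiable and x′(t) = −u(t) + d(t) for all t ≥ 0, where u, d : [0,∞) → ℝ^n satisfy ⟨u(t), ∇f(x(t))⟩ ≥ σ‖∇f(x(t))‖₂ + ρ‖∇f(x(t))‖₂^{1+q} and ‖d(t)‖₂ ≤ ε‖x(t) − π(x(t))‖₂ + d̄ for all t ≥ 0. Then f(x(t)) = f* for all t ≥ T, where T = 1/(μk₁) + 1/(μk₂(q−1)) with k₁ = σ − d̄ − ε/(2√μ) and k₂ = ρ − ε/(2√μ); the settling time is bounded uniformly in x(0) despite the disturbance. (Theorem 2.)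 -/

import Mathlib

open scoped RealInnerProductSpace

lemma mvt_le {F F' : ℝ → ℝ} {a b m : ℝ} (hab : a ≤ b)
    (hF : ∀ t ∈ Set.Icc a b, HasDerivAt F (F' t) t)
    (hm : ∀ t ∈ Set.Icc a b, F' t ≤ m) : F b ≤ F a + m * (b - a) := by
  have hG : ∀ t ∈ Set.Icc a b, HasDerivAt (fun t => m * t - F t) (m - F' t) t := by
    intro t ht
    have h := ((hasDerivAt_id t).const_mul m).sub (hF t ht)
    rw [mul_one] at h
    exact h
  have hmono : MonotoneOn (fun t => m * t - F t) (Set.Icc a b) := by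
    apply monotoneOn_of_deriv_nonneg (convex_Icc a b)
    · intro t ht; exact (hG t ht).continuousAt.continuousWithinAt
    · intro t ht
      rw [interior_Icc] at ht
      exact (hG t (Set.mem_Icc_of_Ioo ht)).differentiableAt.differentiableWithinAt
    · intro t ht
      rw [interior_Icc] at ht
      rw [(hG t (Set.mem_Icc_of_Ioo ht)).deriv]
      have := hm t (Set.mem_Icc_of_Ioo ht)
      linarith
  have := hmono (Set.left_mem_Icc.2 hab) (Set.right_mem_Icc.2 hab) hab
  simp only at this
  linarith

lemma mvt_ge {F F' : ℝ → ℝ} {a b m : ℝ} (hab : a ≤ b)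
    (hF : ∀ t ∈ Set.Icc a b, HasDerivAt F (F' t) t)
    (hm : ∀ t ∈ Set.Icc a b, m ≤ F' t) : F a + m * (b - a) ≤ F b := by
  have := mvt_le (F := fun t => -F t) (F' := fun t => -F' t) (m := -m) hab
    (fun t ht => (hF t ht).neg) (fun t ht => by have := hm t ht; simp; linarith)
  linarith

/-- Theorem 2: fixed-time convergence of the robust FxT gradient flow with
both bounded and vanishing disturbances. -/
theorem robust_fxtgf_fixed_time_convergence
    {n : ℕ} (f : EuclideanSpace ℝ (Fin n) → ℝ) (fstar μ q ε dbar σ ρ : ℝ)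
    (hf : ContDiff ℝ 1 f)
    (hmin : ∃ z, f z = fstar) (hlb : ∀ z, fstar ≤ f z)
    (hμ : 0 < μ)
    (hPL : ∀ z, μ * (f z - fstar) ≤ (1/2) * ‖gradient f z‖ ^ 2)
    (π : EuclideanSpace ℝ (Fin n) → EuclideanSpace ℝ (Fin n))
    (hπ : ∀ z, f (π z) = fstar)
    (hQG : ∀ z, 2 * Real.sqrt μ * ‖z - π z‖ ≤ ‖gradient f z‖)
    (hq : 1 < q) (hε : 0 ≤ ε) (hdbar : 0 ≤ dbar)
    (hσ : dbar + ε / (2 * Real.sqrt μ) < σ)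
    (hρ : ε / (2 * Real.sqrt μ) < ρ)
    (u d : ℝ → EuclideanSpace ℝ (Fin n))
    (x : ℝ → EuclideanSpace ℝ (Fin n))
    (hx : ∀ t ≥ (0:ℝ), HasDerivAt x (-(u t) + d t) t)
    (hu : ∀ t ≥ (0:ℝ),
      σ * ‖gradient f (x t)‖ + ρ * ‖gradient f (x t)‖ ^ (1 + q) ≤ ⟪u t, gradient f (x t)⟫)
    (hd : ∀ t ≥ (0:ℝ), ‖d t‖ ≤ ε * ‖x t - π (x t)‖ + dbar) :
    ∀ t : ℝ,
      1 / (μ * (σ - dbar - ε / (2 * Real.sqrt μ))) +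
        1 / (μ * (ρ - ε / (2 * Real.sqrt μ)) * (q - 1)) ≤ t →
      f (x t) = fstar := by
  have hsμ : 0 < Real.sqrt μ := Real.sqrt_pos.2 hμ
  have h2μ : (0:ℝ) < 2 * μ := by linarith
  obtain ⟨e, he_def⟩ : ∃ e : ℝ, e = ε / (2 * Real.sqrt μ) := ⟨_, rfl⟩
  have he : 0 ≤ e := by rw [he_def]; positivity
  obtain ⟨k₁, hk₁_def⟩ : ∃ k₁ : ℝ, k₁ = σ - dbar - e := ⟨_, rfl⟩
  obtain ⟨k₂, hk₂_def⟩ : ∃ k₂ : ℝ, k₂ = ρ - e := ⟨_, rfl⟩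
  have hk₁ : 0 < k₁ := by rw [hk₁_def, he_def]; linarith
  have hk₂ : 0 < k₂ := by rw [hk₂_def, he_def]; linarith
  obtain ⟨V, hV_def⟩ : ∃ V : ℝ → ℝ, V = fun t => f (x t) - fstar := ⟨_, rfl⟩
  have hV_app : ∀ t, V t = f (x t) - fstar := fun t => by rw [hV_def]
  have hV0 : ∀ t, 0 ≤ V t := fun t => by rw [hV_app]; linarith [hlb (x t)]
  obtain ⟨s, hs_def⟩ : ∃ s : ℝ → ℝ, s = fun t => ‖gradient f (x t)‖ := ⟨_, rfl⟩
  have hs_app : ∀ t, s t = ‖gradient f (x t)‖ := fun t => by rw [hs_def]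
  have hs0 : ∀ t, 0 ≤ s t := fun t => by rw [hs_app]; exact norm_nonneg _
  obtain ⟨V', hV'_def⟩ : ∃ V' : ℝ → ℝ,
      V' = fun t => ⟪gradient f (x t), -(u t) + d t⟫ := ⟨_, rfl⟩
  have hV'_app : ∀ t, V' t = ⟪gradient f (x t), -(u t) + d t⟫ := fun t => by rw [hV'_def]
  -- derivative of V
  have hVd : ∀ t ≥ (0:ℝ), HasDerivAt V (V' t) t := by
    intro t ht
    have h1 : DifferentiableAt ℝ f (x t) := (hf.differentiable one_ne_zero).differentiableAt
    have h2 := (h1.hasGradientAt.hasFDerivAt.comp_hasDerivAt t (hx t ht)).sub_const fstar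
    rw [hV_def, hV'_app]
    simpa using h2
  -- main derivative bound in terms of s
  have hV'le : ∀ t ≥ (0:ℝ), V' t ≤ -(k₁ * s t) - k₂ * s t ^ (1 + q) := by
    intro t ht
    have h1 : V' t = ⟪gradient f (x t), d t⟫ - ⟪u t, gradient f (x t)⟫ := by
      rw [hV'_app, inner_add_right, inner_neg_right, real_inner_comm]
      ring
    have h2 := hu t ht
    rw [← hs_app t] at h2
    have h3 : ⟪gradient f (x t), d t⟫ ≤ s t * ‖d t‖ := by
      rw [hs_app]; exact real_inner_le_norm _ _
    have h4 := hd t ht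
    have h5 : ‖x t - π (x t)‖ ≤ s t / (2 * Real.sqrt μ) := by
      rw [le_div_iff₀ (by positivity), hs_app]
      linarith [hQG (x t)]
    have h6 : s t * ‖d t‖ ≤ e * s t ^ 2 + dbar * s t := by
      have h61 : s t * ‖d t‖ ≤ s t * (ε * (s t / (2 * Real.sqrt μ)) + dbar) := by
        apply mul_le_mul_of_nonneg_left _ (hs0 t)
        have := mul_le_mul_of_nonneg_left h5 hε
        linarith
      have h62 : s t * (ε * (s t / (2 * Real.sqrt μ)) + dbar) = e * s t ^ 2 + dbar * s t := by
        rw [he_def]; field_simp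
      linarith
    have h7 : s t ^ 2 ≤ s t + s t ^ (1 + q) := by
      rcases le_or_gt (s t) 1 with h | h
      · have hA : s t ^ 2 ≤ s t := by nlinarith [hs0 t]
        have hB : (0:ℝ) ≤ s t ^ (1 + q) := Real.rpow_nonneg (hs0 t) _
        linarith
      · have hA : s t ^ ((2:ℕ):ℝ) ≤ s t ^ (1 + q) :=
          Real.rpow_le_rpow_of_exponent_le h.le (by push_cast; linarith)
        rw [Real.rpow_natCast] at hA
        have hB : (0:ℝ) ≤ s t := hs0 t
        push_cast at hA
        linarith
    have h8 : e * s t ^ 2 ≤ e * s t + e * s t ^ (1 + q) := by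
      have := mul_le_mul_of_nonneg_left h7 he
      linarith
    have h9 : e * s t ^ 2 + dbar * s t - (σ * s t + ρ * s t ^ (1 + q)) ≤
        -(k₁ * s t) - k₂ * s t ^ (1 + q) := by
      rw [hk₁_def, hk₂_def]
      nlinarith [h8]
    linarith [h1.le, h3, h6, h2]
  -- PL lower bound on s
  obtain ⟨b, hb_def⟩ : ∃ b : ℝ → ℝ, b = fun t => Real.sqrt (2 * μ * V t) := ⟨_, rfl⟩
  have hb_app : ∀ t, b t = Real.sqrt (2 * μ * V t) := fun t => by rw [hb_def]
  have hble : ∀ t, b t ≤ s t := by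
    intro t
    have h1 : 2 * μ * V t ≤ s t ^ 2 := by
      rw [hV_app, hs_app]; linarith [hPL (x t)]
    calc b t = Real.sqrt (2 * μ * V t) := hb_app t
      _ ≤ Real.sqrt (s t ^ 2) := Real.sqrt_le_sqrt h1
      _ = s t := Real.sqrt_sq (hs0 t)
  have hb0 : ∀ t, 0 ≤ b t := fun t => by rw [hb_app]; exact Real.sqrt_nonneg _
  have hV'le2 : ∀ t ≥ (0:ℝ), V' t ≤ -(k₁ * b t) - k₂ * b t ^ (1 + q) := by
    intro t ht
    have h1 : k₁ * b t ≤ k₁ * s t := mul_le_mul_of_nonneg_left (hble t) hk₁.le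
    have h2 : b t ^ (1 + q) ≤ s t ^ (1 + q) :=
      Real.rpow_le_rpow (hb0 t) (hble t) (by linarith)
    have h3 : k₂ * b t ^ (1 + q) ≤ k₂ * s t ^ (1 + q) :=
      mul_le_mul_of_nonneg_left h2 hk₂.le
    linarith [hV'le t ht]
  have hV'np : ∀ t ≥ (0:ℝ), V' t ≤ 0 := by
    intro t ht
    have h1 : 0 ≤ k₁ * b t := mul_nonneg hk₁.le (hb0 t)
    have h2 : 0 ≤ k₂ * b t ^ (1 + q) :=
      mul_nonneg hk₂.le (Real.rpow_nonneg (hb0 t) _)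
    linarith [hV'le2 t ht]
  -- V is antitone on [0, ∞)
  have hVanti : AntitoneOn V (Set.Ici 0) := by
    apply antitoneOn_of_deriv_nonpos (convex_Ici 0)
    · intro t ht; exact (hVd t ht).continuousAt.continuousWithinAt
    · intro t ht
      rw [interior_Ici] at ht
      exact (hVd t ht.le).differentiableAt.differentiableWithinAt
    · intro t ht
      rw [interior_Ici] at ht
      rw [(hVd t ht.le).deriv]
      exact hV'np t ht.le
  obtain ⟨T₂, hT₂_def⟩ : ∃ T₂ : ℝ, T₂ = 1 / (μ * k₁) := ⟨_, rfl⟩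
  obtain ⟨T₁, hT₁_def⟩ : ∃ T₁ : ℝ, T₁ = 1 / (μ * k₂ * (q - 1)) := ⟨_, rfl⟩
  have hq1 : 0 < q - 1 := by linarith
  have hT₁ : 0 < T₁ := by
    rw [hT₁_def]
    exact one_div_pos.2 (mul_pos (mul_pos hμ hk₂) hq1)
  have hT₂ : 0 < T₂ := by
    rw [hT₂_def]
    exact one_div_pos.2 (mul_pos hμ hk₁)
  -- Phase 1 : V T₁ ≤ 1 / (2 μ)
  have step1 : V T₁ ≤ 1 / (2 * μ) := by
    by_contra hcon
    push_neg at hcon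
    have hVbig : ∀ t ∈ Set.Icc (0:ℝ) T₁, 1 / (2 * μ) < V t := fun t ht =>
      lt_of_lt_of_le hcon
        (hVanti (Set.mem_Ici.2 ht.1) (Set.mem_Ici.2 (le_trans ht.1 ht.2)) ht.2)
    have hVpos : ∀ t ∈ Set.Icc (0:ℝ) T₁, 0 < V t := fun t ht =>
      lt_trans (by positivity) (hVbig t ht)
    obtain ⟨p, hp_def⟩ : ∃ p : ℝ, p = -(q - 1) / 2 := ⟨_, rfl⟩
    have hpneg : p < 0 := by rw [hp_def]; linarith
    obtain ⟨c, hc_def⟩ : ∃ c : ℝ, c = (q - 1) / 2 * k₂ * (2 * μ) ^ ((1 + q) / 2 : ℝ) :=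
      ⟨_, rfl⟩
    have hc : 0 < c := by
      rw [hc_def]
      exact mul_pos (mul_pos (by linarith) hk₂) (Real.rpow_pos_of_pos h2μ _)
    obtain ⟨Y, hY_def⟩ : ∃ Y : ℝ → ℝ, Y = fun t => V t ^ p := ⟨_, rfl⟩
    have hY_app : ∀ t, Y t = V t ^ p := fun t => by rw [hY_def]
    obtain ⟨Y', hY'_def⟩ : ∃ Y' : ℝ → ℝ, Y' = fun t => p * V t ^ (p - 1) * V' t := ⟨_, rfl⟩
    have hYd : ∀ t ∈ Set.Icc (0:ℝ) T₁, HasDerivAt Y (Y' t) t := by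
      intro t ht
      have h1 : V t ≠ 0 := (hVpos t ht).ne'
      have h2 := (Real.hasDerivAt_rpow_const (p := p) (Or.inl h1)).comp t (hVd t ht.1)
      rw [hY_def, hY'_def]
      simpa [Function.comp_def, mul_assoc] using h2
    have hYlb : ∀ t ∈ Set.Icc (0:ℝ) T₁, c ≤ Y' t := by
      intro t ht
      have hVp := hVpos t ht
      have hbpow : b t ^ ((1 + q) : ℝ) =
          (2 * μ) ^ ((1 + q) / 2 : ℝ) * V t ^ ((1 + q) / 2 : ℝ) := by
        rw [hb_app, Real.sqrt_eq_rpow, ← Real.rpow_mul (by positivity),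
          show (1 / 2 * (1 + q) : ℝ) = (1 + q) / 2 by ring,
          Real.mul_rpow h2μ.le (hV0 t)]
      have hVle : V' t ≤ -(k₂ * ((2 * μ) ^ ((1 + q) / 2 : ℝ) * V t ^ ((1 + q) / 2 : ℝ))) := by
        have h1 := hV'le2 t ht.1
        rw [hbpow] at h1
        have h2 : 0 ≤ k₁ * b t := mul_nonneg hk₁.le (hb0 t)
        linarith
      have hN : p * V t ^ (p - 1 : ℝ) ≤ 0 :=
        mul_nonpos_of_nonpos_of_nonneg hpneg.le (Real.rpow_nonneg (hV0 t) _)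
      have h3 := mul_le_mul_of_nonpos_left hVle hN
      have h4 : p * V t ^ (p - 1 : ℝ) *
          (-(k₂ * ((2 * μ) ^ ((1 + q) / 2 : ℝ) * V t ^ ((1 + q) / 2 : ℝ)))) = c := by
        have hVpow : V t ^ (p - 1 : ℝ) * V t ^ ((1 + q) / 2 : ℝ) = 1 := by
          rw [← Real.rpow_add hVp, show (p - 1 + (1 + q) / 2 : ℝ) = 0 by
            rw [hp_def]; ring, Real.rpow_zero]
        have hr : p * V t ^ (p - 1 : ℝ) *
            (-(k₂ * ((2 * μ) ^ ((1 + q) / 2 : ℝ) * V t ^ ((1 + q) / 2 : ℝ)))) =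
            -p * k₂ * (2 * μ) ^ ((1 + q) / 2 : ℝ) *
              (V t ^ (p - 1 : ℝ) * V t ^ ((1 + q) / 2 : ℝ)) := by ring
        rw [hr, hVpow, mul_one, hp_def, hc_def]
        ring
      have hgoal : Y' t = p * V t ^ (p - 1) * V' t := by rw [hY'_def]
      rw [hgoal]
      linarith [h3, h4]
    have key := mvt_ge (le_of_lt hT₁) hYd hYlb
    have hY0 : 0 < Y 0 := by
      rw [hY_app]
      exact Real.rpow_pos_of_pos (hVpos 0 (Set.left_mem_Icc.2 hT₁.le)) p
    have hcT₁ : c * T₁ = (2 * μ) ^ ((q - 1) / 2 : ℝ) := by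
      have hsplit : (2 * μ) ^ ((1 + q) / 2 : ℝ) =
          (2 * μ) ^ ((q - 1) / 2 : ℝ) * (2 * μ) := by
        rw [show ((1 + q) / 2 : ℝ) = (q - 1) / 2 + 1 by ring, Real.rpow_add h2μ,
          Real.rpow_one]
      rw [hc_def, hT₁_def, hsplit]
      field_simp
    have hYT₁ : Y T₁ < (2 * μ) ^ ((q - 1) / 2 : ℝ) := by
      have h1 : V T₁ ^ p < (1 / (2 * μ)) ^ p :=
        Real.rpow_lt_rpow_of_neg (by positivity) hcon hpneg
      have h2 : (1 / (2 * μ) : ℝ) ^ p = (2 * μ) ^ ((q - 1) / 2 : ℝ) := by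
        rw [one_div, ← Real.rpow_neg_one (2 * μ), ← Real.rpow_mul h2μ.le]
        congr 1
        rw [hp_def]; ring
      rw [hY_app, ← h2]
      exact h1
    rw [sub_zero] at key
    linarith
  -- Phase 2 : V (T₂ + T₁) = 0
  have hTT : T₁ ≤ T₂ + T₁ := by linarith
  have step2 : V (T₂ + T₁) ≤ 0 := by
    by_contra hcon
    push_neg at hcon
    have hVpos : ∀ t ∈ Set.Icc T₁ (T₂ + T₁), 0 < V t := fun t ht =>
      lt_of_lt_of_le hcon
        (hVanti (Set.mem_Ici.2 (le_trans hT₁.le ht.1))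
          (Set.mem_Ici.2 (by linarith : (0:ℝ) ≤ T₂ + T₁)) ht.2)
    obtain ⟨m, hm_def⟩ : ∃ m : ℝ, m = k₁ * Real.sqrt (2 * μ) / 2 := ⟨_, rfl⟩
    obtain ⟨Z, hZ_def⟩ : ∃ Z : ℝ → ℝ, Z = fun t => Real.sqrt (V t) := ⟨_, rfl⟩
    have hZ_app : ∀ t, Z t = Real.sqrt (V t) := fun t => by rw [hZ_def]
    obtain ⟨Z', hZ'_def⟩ : ∃ Z' : ℝ → ℝ,
        Z' = fun t => 1 / (2 * Real.sqrt (V t)) * V' t := ⟨_, rfl⟩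
    have hZd : ∀ t ∈ Set.Icc T₁ (T₂ + T₁), HasDerivAt Z (Z' t) t := by
      intro t ht
      have h1 : V t ≠ 0 := (hVpos t ht).ne'
      have h2 := (Real.hasDerivAt_sqrt h1).comp t (hVd t (le_trans hT₁.le ht.1))
      rw [hZ_def, hZ'_def]
      simpa [Function.comp_def, mul_comm] using h2
    have hZub : ∀ t ∈ Set.Icc T₁ (T₂ + T₁), Z' t ≤ -m := by
      intro t ht
      have hVp := hVpos t ht
      have hsV : 0 < Real.sqrt (V t) := Real.sqrt_pos.2 hVp
      have h1 : V' t ≤ -(k₁ * (Real.sqrt (2 * μ) * Real.sqrt (V t))) := by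
        have h2 := hV'le2 t (le_trans hT₁.le ht.1)
        have h3 : 0 ≤ k₂ * b t ^ (1 + q) :=
          mul_nonneg hk₂.le (Real.rpow_nonneg (hb0 t) _)
        have h4 : b t = Real.sqrt (2 * μ) * Real.sqrt (V t) := by
          rw [hb_app, Real.sqrt_mul h2μ.le]
        rw [h4] at h2
        rw [h4] at h3
        linarith
      have h5 : Z' t ≤ 1 / (2 * Real.sqrt (V t)) *
          (-(k₁ * (Real.sqrt (2 * μ) * Real.sqrt (V t)))) := by
        rw [hZ'_def]
        simp only
        exact mul_le_mul_of_nonneg_left h1 (by positivity)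
      have h6 : 1 / (2 * Real.sqrt (V t)) *
          (-(k₁ * (Real.sqrt (2 * μ) * Real.sqrt (V t)))) = -m := by
        rw [hm_def]
        field_simp
      linarith
    have key := mvt_le hTT hZd hZub
    have hZT₁ : Z T₁ ≤ Real.sqrt (1 / (2 * μ)) := by
      rw [hZ_app]
      exact Real.sqrt_le_sqrt step1
    have hmT₂ : m * T₂ = Real.sqrt (1 / (2 * μ)) := by
      have hss : Real.sqrt (2 * μ) * Real.sqrt (2 * μ) = 2 * μ :=
        Real.mul_self_sqrt h2μ.le
      have hsq : 0 < Real.sqrt (2 * μ) := Real.sqrt_pos.2 h2μ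
      have h1 : Real.sqrt (1 / (2 * μ)) = 1 / Real.sqrt (2 * μ) := by
        rw [one_div, one_div, Real.sqrt_inv]
      have h2 : m * T₂ = Real.sqrt (2 * μ) / (2 * μ) := by
        rw [hm_def, hT₂_def]
        field_simp
      have h3 : Real.sqrt (2 * μ) / (2 * μ) = 1 / Real.sqrt (2 * μ) := by
        rw [← hss]
        field_simp
        rw [Real.sq_sqrt (sq_nonneg _)]
      rw [h1, h2, h3]
    have hZT : 0 < Z (T₂ + T₁) := by
      rw [hZ_app]
      exact Real.sqrt_pos.2 (hVpos _ (Set.right_mem_Icc.2 hTT))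
    have hfin : Z T₁ + -m * (T₂ + T₁ - T₁) = Z T₁ - m * T₂ := by ring
    rw [hfin, hmT₂] at key
    linarith
  -- conclude
  intro t ht
  have hTt : T₂ + T₁ ≤ t := by
    rw [hT₁_def, hT₂_def, hk₁_def, hk₂_def, he_def]
    linarith [ht]
  have h0T : (0:ℝ) ≤ T₂ + T₁ := by linarith
  have h1 : V t ≤ V (T₂ + T₁) :=
    hVanti (Set.mem_Ici.2 h0T) (Set.mem_Ici.2 (le_trans h0T hTt)) hTt
  have h2 : V t = 0 := le_antisymm (by linarith) (hV0 t)
  rw [hV_app] at h2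
  linarith
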